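/- Suppose y = Xβ* + ε with β* ∈ ℝᵖ and ε ∈ ℝⁿ, let σ > 0, and let λ > 0 satisfy λ ≥ (1/(nσ))·‖Xᵀε‖_∞. Then the organic lasso variance estimator σ̌²_λ = inf_{β ∈ ℝᵖ} { (1/n)·‖y − Xβ‖₂² + 2λ·‖β‖₁² } satisfies −2λσ²·(‖β*‖₁/σ + 1/4) ≤ σ̌²_λ − (1/n)·‖ε‖₂² ≤ 2λ·‖β*‖₁². -/

import Mathlib

open MeasureTheory ProbabilityTheory Matrix
open scoped ENNReal

noncomputable section

/-- squared Euclidean norm on ℝⁿ -/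
def l2sq {n : ℕ} (v : Fin n → ℝ) : ℝ := ∑ i, (v i) ^ 2

/-- ℓ₁ norm on ℝᵖ -/
def l1 {p : ℕ} (b : Fin p → ℝ) : ℝ := ∑ j, |b j|

/-- sup norm on ℝᵖ -/
def linf {p : ℕ} (v : Fin p → ℝ) : ℝ := ⨆ j, |v j|

lemma swap_sum {n p : ℕ} (X : Matrix (Fin n) (Fin p) ℝ) (ε : Fin n → ℝ) (v : Fin p → ℝ) :
    ∑ i, ε i * X.mulVec v i = ∑ j, Xᵀ.mulVec ε j * v j := by
  simp only [Matrix.mulVec, dotProduct, Matrix.transpose_apply, Finset.mul_sum,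
    Finset.sum_mul]
  rw [Finset.sum_comm]
  apply Finset.sum_congr rfl; intros; apply Finset.sum_congr rfl; intros; ring

lemma holder_bound {p : ℕ} (a v : Fin p → ℝ) : |∑ j, a j * v j| ≤ linf a * l1 v := by
  calc |∑ j, a j * v j| ≤ ∑ j, |a j * v j| := Finset.abs_sum_le_sum_abs _ _
    _ ≤ ∑ j, linf a * |v j| := by
        apply Finset.sum_le_sum; intro j _
        rw [abs_mul, linf]
        exact mul_le_mul_of_nonneg_right
          (le_ciSup (f := fun j => |a j|) (Set.Finite.bddAbove (Set.finite_range _)) j)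
          (abs_nonneg _)
    _ = linf a * l1 v := by rw [l1, Finset.mul_sum]

lemma l2sq_expand {n : ℕ} (ε w : Fin n → ℝ) :
    l2sq (ε + w) = l2sq ε + 2 * (∑ i, ε i * w i) + l2sq w := by
  simp only [l2sq, Pi.add_apply]
  rw [Finset.mul_sum, ← Finset.sum_add_distrib, ← Finset.sum_add_distrib]
  apply Finset.sum_congr rfl; intros; ring

lemma l1_nonneg {p : ℕ} (v : Fin p → ℝ) : 0 ≤ l1 v :=
  Finset.sum_nonneg fun _ _ => abs_nonneg _

lemma l1_sub_le {p : ℕ} (a b : Fin p → ℝ) : l1 (a - b) ≤ l1 a + l1 b := by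
  rw [l1, l1, l1, ← Finset.sum_add_distrib]
  exact Finset.sum_le_sum fun j _ => abs_sub (a j) (b j)

/-- if λ ≥ ‖Xᵀε‖_∞/(nσ), then the organic lasso variance estimator
satisfies a two-sided deterministic bound around ‖ε‖²/n. -/
theorem organic_lasso_close_to_oracle {n p : ℕ} (hn : 0 < n)
    (X : Matrix (Fin n) (Fin p) ℝ) (βstar : Fin p → ℝ) (ε : Fin n → ℝ)
    (y : Fin n → ℝ) (hy : y = X.mulVec βstar + ε)
    (σ : ℝ) (hσ : 0 < σ)
    (lam : ℝ) (hlam : 0 < lam) (hlam2 : (1/(n*σ)) * linf (Xᵀ.mulVec ε) ≤ lam) :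
    -(2*lam*σ^2 * (l1 βstar / σ + 1/4))
        ≤ (⨅ β : Fin p → ℝ, (1/n) * l2sq (y - X.mulVec β) + 2*lam * (l1 β)^2)
            - (1/n) * l2sq ε ∧
    (⨅ β : Fin p → ℝ, (1/n) * l2sq (y - X.mulVec β) + 2*lam * (l1 β)^2)
        - (1/n) * l2sq ε ≤ 2*lam * (l1 βstar)^2 := by
  have hn' : (0:ℝ) < n := by exact_mod_cast hn
  set M : ℝ := linf (Xᵀ.mulVec ε) with hM
  have hM0 : 0 ≤ M := Real.iSup_nonneg fun j => abs_nonneg _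
  have hMlam : (1/n) * M ≤ lam * σ := by
    have h := mul_le_mul_of_nonneg_right hlam2 (le_of_lt hσ)
    have : (1/(n*σ)) * M * σ = (1/n) * M := by field_simp
    linarith [this ▸ h]
  -- lower bound on each objective value
  have hlow : ∀ β : Fin p → ℝ,
      (1/n) * l2sq ε - 2*lam*σ^2 * (l1 βstar / σ + 1/4)
        ≤ (1/n) * l2sq (y - X.mulVec β) + 2*lam * (l1 β)^2 := by
    intro β
    have hw : y - X.mulVec β = ε + X.mulVec (βstar - β) := by
      rw [hy, Matrix.mulVec_sub]; funext i; simp; ring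
    set w := X.mulVec (βstar - β)
    set S := ∑ i, ε i * w i with hS
    have hexp : l2sq (y - X.mulVec β) = l2sq ε + 2 * S + l2sq w := by
      rw [hw, l2sq_expand]
    have hwnn : 0 ≤ l2sq w := Finset.sum_nonneg fun _ _ => sq_nonneg _
    have hSb : |S| ≤ M * (l1 βstar + l1 β) := by
      have h1 : |S| ≤ M * l1 (βstar - β) := by
        rw [hS, swap_sum]; exact holder_bound _ _
      have h2 : l1 (βstar - β) ≤ l1 βstar + l1 β := l1_sub_le _ _
      calc |S| ≤ M * l1 (βstar - β) := h1
        _ ≤ M * (l1 βstar + l1 β) := mul_le_mul_of_nonneg_left h2 hM0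
    have habs : -(M * (l1 βstar + l1 β)) ≤ S := neg_le_of_abs_le hSb
    have hs0 : 0 ≤ l1 βstar := l1_nonneg _
    have ht0 : 0 ≤ l1 β := l1_nonneg _
    have hdiv : σ^2 * (l1 βstar / σ) = σ * l1 βstar := by
      field_simp
    rw [hexp]
    have hkey : -(2*lam*σ) * (l1 βstar + l1 β) ≤ (1/n) * (2 * S) := by
      have h1 : (1/n) * (2 * S) ≥ (1/n) * (2 * -(M * (l1 βstar + l1 β))) := by
        apply mul_le_mul_of_nonneg_left _ (by positivity)
        linarith
      have h2 : (1/n) * (2 * -(M * (l1 βstar + l1 β))) = -(2 * ((1/n)*M)) * (l1 βstar + l1 β) := by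
        ring
      have h3 : -(2 * ((1/n)*M)) * (l1 βstar + l1 β) ≥ -(2*lam*σ) * (l1 βstar + l1 β) := by
        apply mul_le_mul_of_nonneg_right _ (by linarith)
        linarith
      linarith [h2 ▸ h1]
    have hsq : 0 ≤ 2*lam*(l1 β - σ/2)^2 := by positivity
    have hwn : 0 ≤ (1/n) * l2sq w := by positivity
    nlinarith [hkey, hsq, hwn, hdiv]
  have hbdd : BddBelow (Set.range fun β : Fin p → ℝ =>
      (1/n) * l2sq (y - X.mulVec β) + 2*lam * (l1 β)^2) := by
    refine ⟨(1/n) * l2sq ε - 2*lam*σ^2 * (l1 βstar / σ + 1/4), ?_⟩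
    rintro x ⟨β, rfl⟩
    exact hlow β
  constructor
  · have h := le_ciInf hlow
    linarith
  · have h := ciInf_le hbdd βstar
    have heq : y - X.mulVec βstar = ε := by rw [hy]; funext i; simp
    rw [heq] at h
    linarith
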